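/- arXiv:1010.4783 — 4 statements merged into one kernel-verified Lean document; each statement's English description precedes it below -/
import Mathlib

section
/- For all positive real numbers K and A with K/A > e, we have ∫₀^A √(ln(K/x)) dx ≤ 2A√(ln(K/A)). -/
open MeasureTheory

theorem integral_sqrt_log_le (K A : ℝ) (hK : 0 < K) (hA : 0 < A)
    (h : Real.exp 1 < K / A) :
    ∫ x in Set.Ioc (0:ℝ) A, Real.sqrt (Real.log (K / x)) ≤
      2 * A * Real.sqrt (Real.log (K / A)) := by
  set L := Real.log (K / A) with hLdef
  have hL1 : 1 ≤ L := by
    rw [hLdef, ← Real.log_exp 1]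
    exact Real.log_le_log (Real.exp_pos 1) h.le
  have hsL : 1 ≤ Real.sqrt L := by
    rw [show (1:ℝ) = Real.sqrt 1 by simp]
    exact Real.sqrt_le_sqrt hL1
  -- antiderivative for `x ↦ log A - log x`
  set F : ℝ → ℝ := fun x => x * Real.log A - x * Real.log x + x with hFdef
  have hFderiv : ∀ x ∈ Set.Ioo (0:ℝ) A, HasDerivAt F (Real.log A - Real.log x) x := by
    intro x hx
    have h1 : HasDerivAt (fun x : ℝ => x * Real.log A) (Real.log A) x := by
      simpa using (hasDerivAt_id x).mul_const (Real.log A)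
    have h2 : HasDerivAt (fun x : ℝ => x * Real.log x) (Real.log x + 1) x :=
      Real.hasDerivAt_mul_log hx.1.ne'
    have := (h1.sub h2).add (hasDerivAt_id x)
    exact this.congr_deriv (by ring)
  have hFcont : Continuous F := by
    have : Continuous fun x : ℝ => x * Real.log x := Real.continuous_mul_log
    fun_prop
  have hFpos : ∀ x ∈ Set.Ioo (0:ℝ) A, 0 ≤ Real.log A - Real.log x := by
    intro x hx
    have := Real.log_le_log hx.1 hx.2.le
    linarith
  have hlogint : IntegrableOn (fun x => Real.log A - Real.log x) (Set.Ioc 0 A) := by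
    exact intervalIntegral.integrableOn_deriv_of_nonneg hFcont.continuousOn hFderiv hFpos
  have hlogval : ∫ x in Set.Ioc (0:ℝ) A, (Real.log A - Real.log x) = A := by
    rw [← intervalIntegral.integral_of_le hA.le]
    have hint : IntervalIntegrable (fun x => Real.log A - Real.log x) volume 0 A := by
      rw [intervalIntegrable_iff_integrableOn_Ioc_of_le hA.le]
      exact hlogint
    have hF0 : F 0 = 0 := by norm_num [hFdef]
    have hFA : F A = A := by simp only [hFdef]; ring
    have h0 : Filter.Tendsto F (nhdsWithin 0 (Set.Ioi 0)) (nhds 0) := by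
      have := (hFcont.tendsto 0).mono_left (nhdsWithin_le_nhds (s := Set.Ioi (0:ℝ)))
      rwa [hF0] at this
    have hAt : Filter.Tendsto F (nhdsWithin A (Set.Iio A)) (nhds A) := by
      have := (hFcont.tendsto A).mono_left (nhdsWithin_le_nhds (s := Set.Iio A))
      rwa [hFA] at this
    rw [intervalIntegral.integral_eq_sub_of_hasDerivAt_of_tendsto hA hFderiv hint h0 hAt]
    ring
  -- the majorant
  set g : ℝ → ℝ := fun x => Real.sqrt L + (Real.log A - Real.log x + 1) / 2 with hgdef
  have hgint : IntegrableOn g (Set.Ioc 0 A) := by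
    apply Integrable.add
    · exact integrableOn_const measure_Ioc_lt_top.ne
    · exact ((hlogint.add (integrableOn_const measure_Ioc_lt_top.ne)).div_const 2)
  -- pointwise bound
  have hbound : ∀ x ∈ Set.Ioc (0:ℝ) A, Real.sqrt (Real.log (K / x)) ≤ g x := by
    intro x hx
    have hx0 : 0 < x := hx.1
    set t := Real.log A - Real.log x with htdef
    have ht : 0 ≤ t := by
      have := Real.log_le_log hx0 hx.2
      simp only [htdef]; linarith
    have hsplit : Real.log (K / x) = L + t := by
      rw [hLdef, htdef, Real.log_div hK.ne' hx0.ne', Real.log_div hK.ne' hA.ne']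
      ring
    have h1 : Real.sqrt (L + t) ≤ Real.sqrt L + Real.sqrt t := by
      rw [show Real.sqrt L + Real.sqrt t = Real.sqrt ((Real.sqrt L + Real.sqrt t) ^ 2) from
        (Real.sqrt_sq (by positivity)).symm]
      apply Real.sqrt_le_sqrt
      nlinarith [Real.sq_sqrt (show (0:ℝ) ≤ L by linarith), Real.sq_sqrt ht,
        Real.sqrt_nonneg L, Real.sqrt_nonneg t]
    have h2 : Real.sqrt t ≤ (t + 1) / 2 := by
      nlinarith [sq_nonneg (Real.sqrt t - 1), Real.sq_sqrt ht, Real.sqrt_nonneg t]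
    rw [hsplit]
    simp only [hgdef, htdef] at *
    linarith
  -- integral of the majorant
  have hgval : ∫ x in Set.Ioc (0:ℝ) A, g x = A * Real.sqrt L + A := by
    simp only [hgdef]
    have hc1 : IntegrableOn (fun _ : ℝ => Real.sqrt L) (Set.Ioc 0 A) :=
      integrableOn_const measure_Ioc_lt_top.ne
    have hc2 : IntegrableOn (fun _ : ℝ => (1:ℝ)) (Set.Ioc 0 A) :=
      integrableOn_const measure_Ioc_lt_top.ne
    have h3 : IntegrableOn (fun x : ℝ => Real.log A - Real.log x + 1) (Set.Ioc 0 A) :=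
      hlogint.add hc2
    have h4 : IntegrableOn (fun x : ℝ => (Real.log A - Real.log x + 1) / 2) (Set.Ioc 0 A) :=
      h3.div_const 2
    rw [integral_add hc1 h4, integral_div, integral_add hlogint hc2, hlogval,
      setIntegral_const, setIntegral_const]
    simp [Real.volume_Ioc, ENNReal.toReal_ofReal hA.le]
    rw [max_eq_left hA.le]; ring
  have hmono : ∫ x in Set.Ioc (0:ℝ) A, Real.sqrt (Real.log (K / x)) ≤
      ∫ x in Set.Ioc (0:ℝ) A, g x := by
    apply integral_mono_of_nonneg
    · exact Filter.Eventually.of_forall (fun x => Real.sqrt_nonneg _)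
    · exact hgint
    · exact (ae_restrict_iff' measurableSet_Ioc).2 (Filter.Eventually.of_forall hbound)
  have hfin : A * Real.sqrt L + A ≤ 2 * A * Real.sqrt L := by
    nlinarith [hA, hsL]
  calc ∫ x in Set.Ioc (0:ℝ) A, Real.sqrt (Real.log (K / x))
      ≤ ∫ x in Set.Ioc (0:ℝ) A, g x := hmono
    _ = A * Real.sqrt L + A := hgval
    _ ≤ 2 * A * Real.sqrt L := hfin
end

section
/- Let V be a finite subset of G containing i, and let Q, R be probability measures on 𝒳(V). Then for every configuration x with R(x(V\{i})) > 0 and Q(x(V\{i})) > 0, |Q_{i|V}(x) - R_{i|V}(x)| ≤ 3 · sup_{y : R(y(V\{i})) ≠ 0} |Q(y(V)) - R(y(V))| / R(y(V\{i})). -/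
open MeasureTheory

/-- Probability of the full cylinder `Q(x(V))`. -/
noncomputable def cylFull {ι : Type*} (Q : Measure (ι → Bool)) (x : ι → Bool) : ℝ :=
  (Q {x}).toReal

/-- Marginal probability `Q(x(V \ {i}))`. -/
noncomputable def cylMarg {ι : Type*} (Q : Measure (ι → Bool)) (i : ι) (x : ι → Bool) : ℝ :=
  (Q {y | ∀ j, j ≠ i → y j = x j}).toReal

/-- Conditional probability `Q_{i|V}(x) = Q(x(V)) / Q(x(V \ {i}))`. -/
noncomputable def condP {ι : Type*} (Q : Measure (ι → Bool)) (i : ι) (x : ι → Bool) : ℝ :=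
  cylFull Q x / cylMarg Q i x

lemma marg_set_eq {ι : Type*} [DecidableEq ι] (i : ι) (x : ι → Bool) :
    {y : ι → Bool | ∀ j, j ≠ i → y j = x j} =
      {x, Function.update x i (!x i)} := by
  ext y
  constructor
  · intro h
    by_cases hy : y i = x i
    · left
      funext j
      by_cases hj : j = i
      · simp [hj, hy]
      · exact h j hj
    · right
      funext j
      by_cases hj : j = i
      · subst hj
        simp only [Function.update_self]
        cases hx : x j <;> cases hyj : y j <;> simp_all
      · rw [Function.update_of_ne hj]
        exact h j hj
  · rintro (rfl | rfl)
    · intro j hj; rfl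
    · intro j hj; rw [Function.update_of_ne hj]

lemma marg_eq_add {ι : Type*} [DecidableEq ι] [Fintype ι] (Q : Measure (ι → Bool))
    [IsProbabilityMeasure Q] (i : ι) (x : ι → Bool) :
    cylMarg Q i x = cylFull Q x + cylFull Q (Function.update x i (!x i)) := by
  have hne : x ≠ Function.update x i (!x i) := by
    intro h
    have := congrFun h i
    simp at this
  unfold cylMarg cylFull
  rw [marg_set_eq i x]
  have : ({x, Function.update x i (!x i)} : Set (ι → Bool)) =
      {x} ∪ {Function.update x i (!x i)} := rfl
  rw [this, measure_union (by simpa using hne) (measurableSet_singleton _),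
    ENNReal.toReal_add (measure_ne_top Q _) (measure_ne_top Q _)]

lemma marg_update {ι : Type*} [DecidableEq ι] (R : Measure (ι → Bool)) (i : ι) (x : ι → Bool) :
    cylMarg R i (Function.update x i (!x i)) = cylMarg R i x := by
  unfold cylMarg
  have hset : {y : ι → Bool | ∀ j, j ≠ i → y j = Function.update x i (!x i) j} =
      {y : ι → Bool | ∀ j, j ≠ i → y j = x j} := by
    ext y
    constructor <;> intro h j hj <;> have := h j hj <;>
      simpa [Function.update_of_ne hj] using this
  rw [hset]

theorem condProb_difference_bound {ι : Type*} [Fintype ι]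
    (Q R : Measure (ι → Bool)) [IsProbabilityMeasure Q] [IsProbabilityMeasure R]
    (i : ι) (x : ι → Bool)
    (hR : 0 < cylMarg R i x) (hQ : 0 < cylMarg Q i x) :
    |condP Q i x - condP R i x| ≤
      3 * sSup {v : ℝ | ∃ y : ι → Bool, cylMarg R i y ≠ 0 ∧
        v = |cylFull Q y - cylFull R y| / cylMarg R i y} := by
  classical
  set S := {v : ℝ | ∃ y : ι → Bool, cylMarg R i y ≠ 0 ∧
      v = |cylFull Q y - cylFull R y| / cylMarg R i y} with hS
  set M := sSup S with hM
  have hSfin : S.Finite := by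
    apply Set.Finite.subset (Set.finite_range
      (fun y : ι → Bool => |cylFull Q y - cylFull R y| / cylMarg R i y))
    rintro v ⟨y, _, rfl⟩
    exact ⟨y, rfl⟩
  have hbdd : BddAbove S := hSfin.bddAbove
  have hmem : ∀ y : ι → Bool, cylMarg R i y ≠ 0 →
      |cylFull Q y - cylFull R y| / cylMarg R i y ≤ M :=
    fun y hy => le_csSup hbdd ⟨y, hy, rfl⟩
  set x' := Function.update x i (!x i) with hx'
  set a := cylFull Q x
  set a' := cylFull Q x'
  set b := cylFull R x
  set b' := cylFull R x'
  have hQm : cylMarg Q i x = a + a' := marg_eq_add Q i x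
  have hRm : cylMarg R i x = b + b' := marg_eq_add R i x
  have hRm' : cylMarg R i x' = cylMarg R i x := marg_update R i x
  have ha : 0 ≤ a := ENNReal.toReal_nonneg
  have ha' : 0 ≤ a' := ENNReal.toReal_nonneg
  have hb : 0 ≤ b := ENNReal.toReal_nonneg
  have hb' : 0 ≤ b' := ENNReal.toReal_nonneg
  have h1 : |a - b| / cylMarg R i x ≤ M := hmem x hR.ne'
  have h2 : |a' - b'| / cylMarg R i x ≤ M := by
    have := hmem x' (by rw [hRm']; exact hR.ne')
    rwa [hRm'] at this
  have h1' : |a - b| ≤ M * cylMarg R i x := by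
    rw [div_le_iff₀ hR] at h1; linarith
  have h2' : |a' - b'| ≤ M * cylMarg R i x := by
    rw [div_le_iff₀ hR] at h2; linarith
  have hM0 : 0 ≤ M :=
    le_trans (div_nonneg (abs_nonneg _) hR.le) h1
  rw [hQm] at hQ
  rw [hRm] at hR h1' h2'
  unfold condP
  rw [hQm, hRm, div_sub_div _ _ hQ.ne' hR.ne', abs_div, abs_of_pos (mul_pos hQ hR),
    div_le_iff₀ (mul_pos hQ hR)]
  have e : a * (b + b') - (a + a') * b = a * (b' - a') + a' * (a - b) := by ring
  calc |a * (b + b') - (a + a') * b|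
      = |a * (b' - a') + a' * (a - b)| := by rw [e]
    _ ≤ |a * (b' - a')| + |a' * (a - b)| := abs_add_le _ _
    _ = a * |a' - b'| + a' * |a - b| := by
        rw [abs_mul, abs_mul, abs_of_nonneg ha, abs_of_nonneg ha', abs_sub_comm b' a']
    _ ≤ 3 * M * ((a + a') * (b + b')) := by nlinarith [abs_nonneg (a - b), abs_nonneg (a' - b')]
end

section
/- Let (G, A, P) be an Ising model with pairwise potential f with temperature parameter r^{-1}. Then there exist positive constants c_r* ≤ C_r* depending only on r (one may take c_r* = (1-e^{-4r})e^{-2r}/(4r(1+e^{2r})^3) and C_r* = (e^{4r}-1)e^{2r}/(4r(1+e^{-2r})^2)) such that for every subset V of G, c_r* ∑_{j∉V} ω_{i,j}(f) ≤ ‖P_{i|G} - P_{i|V}‖_∞ ≤ C_r* ∑_{j∉V} ω_{i,j}(f). -/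
open MeasureTheory

/-- `g_{i,j}(a,b) = f_{i,j}(a,b) - f_{i,j}(-a,b)`. -/
noncomputable def gpot {G : Type*} (f : G → G → Bool → Bool → ℝ) (i j : G) (a b : Bool) : ℝ :=
  f i j a b - f i j (!a) b

/-- One-point specification of the Ising model:
`spec f i a y = (1 + exp(-∑_j g_{i,j}(a, y(j))))⁻¹`. -/
noncomputable def spec {G : Type*} (f : G → G → Bool → Bool → ℝ) (i : G) (a : Bool)
    (y : G → Bool) : ℝ :=
  1 / (1 + Real.exp (-(∑' j, gpot f i j a (y j))))

/-- `P` is an Ising model with potential `f` (DLR equations). -/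
def IsIsing {G : Type*} [MeasurableSpace (G → Bool)] (f : G → G → Bool → Bool → ℝ)
    (P : Measure (G → Bool)) : Prop :=
  ∀ (i : G) (B : Set (G → Bool)), MeasurableSet B →
    (∀ y z : G → Bool, (∀ j, j ≠ i → y j = z j) → (y ∈ B ↔ z ∈ B)) →
    ∀ a : Bool, P (B ∩ {y | y i = a}) = ENNReal.ofReal (∫ y in B, spec f i a y ∂P)

/-- `ω_{i,j}(f) = sup_{a,b} (g_{i,j}(a,b) - g_{i,j}(a,-b))`. -/
noncomputable def omegaf {G : Type*} (f : G → G → Bool → Bool → ℝ) (i j : G) : ℝ :=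
  ⨆ a : Bool, ⨆ b : Bool, (gpot f i j a b - gpot f i j a (!b))

/-- Conditional probability `P_{i|V}(x) = P(x(i) | x(V \ {i}))`, with the convention
that it equals `1/2` when the conditioning cylinder has probability `0`. -/
noncomputable def condProb {G : Type*} [DecidableEq G] (P : Measure (G → Bool)) (i : G)
    (V : Finset G) (x : G → Bool) : ℝ :=
  if P {y | ∀ j ∈ V.erase i, y j = x j} = 0 then 1/2
  else (P {y | y i = x i ∧ ∀ j ∈ V.erase i, y j = x j}).toReal /
    (P {y | ∀ j ∈ V.erase i, y j = x j}).toReal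

open Filter

section Aux
variable {G : Type*}

lemma ciSup_bool_eq (F : Bool → ℝ) : (⨆ b : Bool, F b) = max (F true) (F false) := by
  apply le_antisymm
  · refine ciSup_le fun b => ?_
    cases b
    · exact le_max_right _ _
    · exact le_max_left _ _
  · exact max_le (le_ciSup (Set.finite_range F).bddAbove true)
      (le_ciSup (Set.finite_range F).bddAbove false)

lemma omegaf_eq (f : G → G → Bool → Bool → ℝ) (i j : G) :
    omegaf f i j = |gpot f i j true true - gpot f i j true false| := by
  have h : ∀ a : Bool, (⨆ b : Bool, (gpot f i j a b - gpot f i j a (!b)))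
      = |gpot f i j true true - gpot f i j true false| := by
    intro a
    rw [ciSup_bool_eq, abs_eq_max_neg]
    cases a
    · simp only [gpot, Bool.not_true, Bool.not_false]
      rw [max_comm]; congr 1 <;> ring
    · simp only [gpot, Bool.not_true, Bool.not_false]
      congr 1 <;> ring
  unfold omegaf
  simp only [h, ciSup_const]

lemma omegaf_nonneg (f : G → G → Bool → Bool → ℝ) (i j : G) : 0 ≤ omegaf f i j := by
  rw [omegaf_eq]; exact abs_nonneg _

private lemma habs {x y : ℝ} (h : x = y ∨ x = -y) : |x| ≤ |y| := by
  rcases h with h | h <;> rw [h] <;> simp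

lemma abs_gpot_sub_le (f : G → G → Bool → Bool → ℝ) (i j : G) (a b b' : Bool) :
    |gpot f i j a b - gpot f i j a b'| ≤ omegaf f i j := by
  rw [omegaf_eq]
  cases a <;> cases b <;> cases b' <;>
    simp only [gpot, Bool.not_true, Bool.not_false, sub_self, abs_zero] <;>
    first
      | exact abs_nonneg _
      | (apply habs; left; ring1)
      | (apply habs; right; ring1)

lemma abs_gpot_le (f : G → G → Bool → Bool → ℝ) (i j : G) (a b : Bool) :
    |gpot f i j a b| ≤ max |f i j a true| |f i j a false|
      + max |f i j (!a) true| |f i j (!a) false| := by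
  refine (abs_sub _ _).trans (add_le_add ?_ ?_) <;> cases b <;>
    simp [le_max_left, le_max_right]

end Aux

section Sigma

lemma exp_chord {t T : ℝ} (hT : 0 < T) (h0 : 0 ≤ t) (h1 : t ≤ T) :
    t * (1 - Real.exp (-T)) / T ≤ 1 - Real.exp (-t) := by
  have ha : (0:ℝ) ≤ 1 - t / T := by
    rw [sub_nonneg, div_le_one hT]; exact h1
  have hb : (0:ℝ) ≤ t / T := div_nonneg h0 hT.le
  have hab : (1 - t / T) + t / T = 1 := by ring
  have h := convexOn_exp.2 (Set.mem_univ (0:ℝ)) (Set.mem_univ (-T)) ha hb hab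
  simp only [smul_eq_mul, mul_zero, zero_add, Real.exp_zero, mul_one] at h
  have he : t / T * (-T) = -t := by field_simp
  rw [he] at h
  have h2 : t * (1 - Real.exp (-T)) / T = t / T - t / T * Real.exp (-T) := by
    field_simp
  rw [h2]; linarith

lemma sigma_diff (u v : ℝ) :
    1 / (1 + Real.exp (-u)) - 1 / (1 + Real.exp (-v))
      = (Real.exp (-v) - Real.exp (-u)) / ((1 + Real.exp (-u)) * (1 + Real.exp (-v))) := by
  have h1 : (0:ℝ) < 1 + Real.exp (-u) := by positivity
  have h2 : (0:ℝ) < 1 + Real.exp (-v) := by positivity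
  field_simp
  ring

lemma sigma_le_upper {r u v : ℝ} (hr : 0 < r) (hu : |u| ≤ 2*r) (hv : |v| ≤ 2*r) (hvu : v ≤ u) :
    1 / (1 + Real.exp (-u)) - 1 / (1 + Real.exp (-v))
      ≤ Real.exp (2*r) / (1 + Real.exp (-(2*r)))^2 * (u - v) := by
  rw [sigma_diff, div_mul_eq_mul_div]
  rw [abs_le] at hu hv
  have h1 : (0:ℝ) < 1 + Real.exp (-u) := by positivity
  have h2 : (0:ℝ) < 1 + Real.exp (-v) := by positivity
  have hnum : Real.exp (-v) - Real.exp (-u) ≤ Real.exp (2*r) * (u - v) := by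
    have heq : Real.exp (-v) - Real.exp (-u) = Real.exp (-v) * (1 - Real.exp (-(u - v))) := by
      rw [mul_sub, mul_one, ← Real.exp_add]; ring_nf
    rw [heq]
    have hb1 : 1 - Real.exp (-(u - v)) ≤ u - v := by
      have := Real.add_one_le_exp (-(u - v)); linarith
    have hb0 : 0 ≤ 1 - Real.exp (-(u - v)) := by
      have : Real.exp (-(u-v)) ≤ 1 := Real.exp_le_one_iff.mpr (by linarith)
      linarith
    have hev : Real.exp (-v) ≤ Real.exp (2*r) := Real.exp_le_exp.mpr (by linarith)
    calc Real.exp (-v) * (1 - Real.exp (-(u - v)))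
        ≤ Real.exp (2*r) * (1 - Real.exp (-(u - v))) :=
          mul_le_mul_of_nonneg_right hev hb0
      _ ≤ Real.exp (2*r) * (u - v) :=
          mul_le_mul_of_nonneg_left hb1 (Real.exp_pos _).le
  have hden : (1 + Real.exp (-(2*r)))^2 ≤ (1 + Real.exp (-u)) * (1 + Real.exp (-v)) := by
    have h3 : Real.exp (-(2*r)) ≤ Real.exp (-u) := Real.exp_le_exp.mpr (by linarith)
    have h4 : Real.exp (-(2*r)) ≤ Real.exp (-v) := Real.exp_le_exp.mpr (by linarith)
    have h5 : (0:ℝ) < 1 + Real.exp (-(2*r)) := by positivity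
    nlinarith
  exact div_le_div₀ (mul_nonneg (Real.exp_pos _).le (by linarith)) hnum (by positivity) hden

lemma sigma_ge_lower {r u v : ℝ} (hr : 0 < r) (hu : |u| ≤ 2*r) (hv : |v| ≤ 2*r) (hvu : v ≤ u)
    (h4 : u - v ≤ 4*r) :
    (1 - Real.exp (-(4*r))) * Real.exp (-(2*r)) / (4*r*(1 + Real.exp (2*r))^2) * (u - v)
      ≤ 1 / (1 + Real.exp (-u)) - 1 / (1 + Real.exp (-v)) := by
  rw [sigma_diff]
  rw [abs_le] at hu hv
  have h1 : (0:ℝ) < 1 + Real.exp (-u) := by positivity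
  have h2 : (0:ℝ) < 1 + Real.exp (-v) := by positivity
  have hnum : (1 - Real.exp (-(4*r))) * Real.exp (-(2*r)) * (u - v) / (4*r)
      ≤ Real.exp (-v) - Real.exp (-u) := by
    have heq : Real.exp (-v) - Real.exp (-u) = Real.exp (-v) * (1 - Real.exp (-(u - v))) := by
      rw [mul_sub, mul_one, ← Real.exp_add]; ring_nf
    rw [heq]
    have hchord : (u - v) * (1 - Real.exp (-(4*r))) / (4*r) ≤ 1 - Real.exp (-(u - v)) :=
      exp_chord (by linarith) (by linarith) h4
    have hev : Real.exp (-(2*r)) ≤ Real.exp (-v) := Real.exp_le_exp.mpr (by linarith)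
    have he1 : Real.exp (-(4*r)) ≤ 1 := Real.exp_le_one_iff.mpr (by linarith)
    have hchord0 : 0 ≤ (u - v) * (1 - Real.exp (-(4*r))) / (4*r) :=
      div_nonneg (mul_nonneg (by linarith) (by linarith)) (by linarith)
    calc (1 - Real.exp (-(4*r))) * Real.exp (-(2*r)) * (u - v) / (4*r)
        = Real.exp (-(2*r)) * ((u - v) * (1 - Real.exp (-(4*r))) / (4*r)) := by ring
      _ ≤ Real.exp (-v) * ((u - v) * (1 - Real.exp (-(4*r))) / (4*r)) :=
          mul_le_mul_of_nonneg_right hev hchord0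
      _ ≤ Real.exp (-v) * (1 - Real.exp (-(u - v))) :=
          mul_le_mul_of_nonneg_left hchord (Real.exp_pos _).le
  have hden : (1 + Real.exp (-u)) * (1 + Real.exp (-v)) ≤ (1 + Real.exp (2*r))^2 := by
    have h3 : Real.exp (-u) ≤ Real.exp (2*r) := Real.exp_le_exp.mpr (by linarith)
    have h4' : Real.exp (-v) ≤ Real.exp (2*r) := Real.exp_le_exp.mpr (by linarith)
    nlinarith [Real.exp_pos (-u), Real.exp_pos (-v)]
  have hnum0 : 0 ≤ Real.exp (-v) - Real.exp (-u) := by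
    have := Real.exp_le_exp.mpr (neg_le_neg hvu); linarith
  rw [div_mul_eq_mul_div, ← div_div]
  exact div_le_div₀ hnum0 hnum (by positivity) hden

lemma sigma_abs_le {r u v : ℝ} (hr : 0 < r) (hu : |u| ≤ 2*r) (hv : |v| ≤ 2*r) :
    |1 / (1 + Real.exp (-u)) - 1 / (1 + Real.exp (-v))|
      ≤ Real.exp (2*r) / (1 + Real.exp (-(2*r)))^2 * |u - v| := by
  rcases le_total v u with h | h
  · have hd : 0 ≤ 1 / (1 + Real.exp (-u)) - 1 / (1 + Real.exp (-v)) := by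
      rw [sigma_diff]
      have h1 : Real.exp (-u) ≤ Real.exp (-v) := Real.exp_le_exp.mpr (by linarith)
      apply div_nonneg (by linarith) (by positivity)
    rw [abs_of_nonneg hd, abs_of_nonneg (by linarith : (0:ℝ) ≤ u - v)]
    exact sigma_le_upper hr hu hv h
  · have hd : 0 ≤ 1 / (1 + Real.exp (-v)) - 1 / (1 + Real.exp (-u)) := by
      rw [sigma_diff]
      have h1 : Real.exp (-v) ≤ Real.exp (-u) := Real.exp_le_exp.mpr (by linarith)
      apply div_nonneg (by linarith) (by positivity)
    rw [abs_sub_comm, abs_sub_comm u v, abs_of_nonneg hd,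
      abs_of_nonneg (by linarith : (0:ℝ) ≤ v - u)]
    exact sigma_le_upper hr hv hu h

end Sigma

section Meas
variable {G : Type*}

lemma spec_pos (f : G → G → Bool → Bool → ℝ) (i : G) (a : Bool) (y : G → Bool) :
    0 < spec f i a y := by
  unfold spec; positivity

lemma spec_le_one (f : G → G → Bool → Bool → ℝ) (i : G) (a : Bool) (y : G → Bool) :
    spec f i a y ≤ 1 := by
  unfold spec
  rw [div_le_one (by positivity)]
  nlinarith [Real.exp_pos (-(∑' j, gpot f i j a (y j)))]

lemma measurable_S [Countable G] (f : G → G → Bool → Bool → ℝ) (i : G) (a : Bool)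
    (hgsum : ∀ y : G → Bool, Summable fun j => gpot f i j a (y j)) :
    Measurable fun y : G → Bool => ∑' j, gpot f i j a (y j) := by
  have hmeas : ∀ s : Finset G, Measurable fun y : G → Bool => ∑ j ∈ s, gpot f i j a (y j) :=
    fun s => Finset.measurable_sum _ fun j _ =>
      (measurable_of_countable fun b => gpot f i j a b).comp (measurable_pi_apply j)
  refine measurable_of_tendsto_metrizable' (atTop : Filter (Finset G)) hmeas ?_
  rw [tendsto_pi_nhds]
  exact fun y => (hgsum y).hasSum

lemma measurable_spec [Countable G] (f : G → G → Bool → Bool → ℝ) (i : G) (a : Bool)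
    (hgsum : ∀ y : G → Bool, Summable fun j => gpot f i j a (y j)) :
    Measurable (spec f i a) := by
  unfold spec
  exact (measurable_const.div
    (measurable_const.add ((measurable_S f i a hgsum).neg.exp)))

lemma integrable_spec [Countable G] (f : G → G → Bool → Bool → ℝ) (i : G) (a : Bool)
    (hgsum : ∀ y : G → Bool, Summable fun j => gpot f i j a (y j))
    (μ : Measure (G → Bool)) [IsFiniteMeasure μ] : Integrable (spec f i a) μ := by
  refine Integrable.mono' (integrable_const 1)
    (measurable_spec f i a hgsum).aestronglyMeasurable ?_
  filter_upwards with y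
  rw [Real.norm_eq_abs, abs_of_pos (spec_pos f i a y)]
  exact spec_le_one f i a y

lemma measurableSet_cylinder [Countable G] (W : Finset G) (x : G → Bool) :
    MeasurableSet {y : G → Bool | ∀ j ∈ W, y j = x j} := by
  have : {y : G → Bool | ∀ j ∈ W, y j = x j} = ⋂ j ∈ W, {y : G → Bool | y j = x j} := by
    ext y; simp
  rw [this]
  refine MeasurableSet.biInter W.countable_toSet fun j _ => ?_
  have h := (measurable_pi_apply (X := fun _ : G => Bool) j)
    (MeasurableSet.singleton (x j))
  exact h

lemma cylinder_pos [Countable G] (f : G → G → Bool → Bool → ℝ)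
    (P : Measure (G → Bool)) [IsProbabilityMeasure P] (hP : IsIsing f P)
    (δ : ℝ) (hδ : 0 < δ) (hlb : ∀ (k : G) (b : Bool) (y : G → Bool), δ ≤ spec f k b y)
    (hgsum : ∀ (k : G) (b : Bool) (y : G → Bool), Summable fun j => gpot f k j b (y j)) :
    ∀ (W : Finset G) (x : G → Bool), 0 < P {y | ∀ j ∈ W, y j = x j} := by
  classical
  intro W
  induction W using Finset.induction_on with
  | empty =>
    intro x
    simp only [Finset.notMem_empty, false_implies, implies_true, Set.setOf_true]
    simp
  | @insert k W hk ih =>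
    intro x
    set B := {y : G → Bool | ∀ j ∈ W, y j = x j} with hB
    have hBmeas : MeasurableSet B := measurableSet_cylinder W x
    have hBinv : ∀ y z : G → Bool, (∀ j, j ≠ k → y j = z j) → (y ∈ B ↔ z ∈ B) := by
      intro y z hyz
      constructor <;> intro h j hj
      · rw [← hyz j (by rintro rfl; exact hk hj)]; exact h j hj
      · rw [hyz j (by rintro rfl; exact hk hj)]; exact h j hj
    have hset : {y : G → Bool | ∀ j ∈ insert k W, y j = x j} = B ∩ {y | y k = x k} := by
      ext y
      simp only [Set.mem_setOf_eq, Finset.mem_insert, Set.mem_inter_iff, hB]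
      constructor
      · intro h; exact ⟨fun j hj => h j (Or.inr hj), h k (Or.inl rfl)⟩
      · rintro ⟨h1, h2⟩ j hj
        rcases hj with rfl | hj
        · exact h2
        · exact h1 j hj
    rw [hset, hP k B hBmeas hBinv (x k)]
    have hpb : 0 < (P B).toReal :=
      ENNReal.toReal_pos (ih x).ne' (measure_ne_top P B)
    have hint : δ * (P B).toReal ≤ ∫ y in B, spec f k (x k) y ∂P := by
      have h1 : ∫ y in B, δ ∂P ≤ ∫ y in B, spec f k (x k) y ∂P := by
        apply setIntegral_mono_on (integrable_const δ).integrableOn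
          (integrable_spec f k (x k) (hgsum k (x k)) P).integrableOn hBmeas
        exact fun y _ => hlb k (x k) y
      rwa [setIntegral_const, smul_eq_mul, mul_comm] at h1
    exact ENNReal.ofReal_pos.mpr (lt_of_lt_of_le (by positivity) hint)

end Meas

theorem ising_bias_two_sided_bound {G : Type*} [Countable G] [DecidableEq G]
    (f : G → G → Bool → Bool → ℝ) (r : ℝ) (hr : 0 < r)
    (hdiag : ∀ (i : G) (a b : Bool), f i i a b = 0)
    (hsum : ∀ (i : G) (a : Bool), Summable fun j => max |f i j a true| |f i j a false|)
    (hrange : ∀ (i : G) (a : Bool), (∑' j, max |f i j a true| |f i j a false|) ≤ r)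
    (P : Measure (G → Bool)) [IsProbabilityMeasure P] (hP : IsIsing f P)
    (i : G) (V : Finset G) :
    ((1 - Real.exp (-(4*r))) * Real.exp (-(2*r)) / (4*r*(1 + Real.exp (2*r))^3)) *
        (∑' j : {j : G // j ∉ V}, omegaf f i (j : G)) ≤
        (⨆ x : G → Bool, |spec f i (x i) x - condProb P i V x|) ∧
      (⨆ x : G → Bool, |spec f i (x i) x - condProb P i V x|) ≤
        ((Real.exp (4*r) - 1) * Real.exp (2*r) / (4*r*(1 + Real.exp (-(2*r)))^2)) *
          (∑' j : {j : G // j ∉ V}, omegaf f i (j : G)) := by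
  classical
  -- summability of the interaction terms
  have habs_summ : ∀ (k : G) (b : Bool) (y : G → Bool),
      Summable fun j => |gpot f k j b (y j)| := by
    intro k b y
    refine Summable.of_nonneg_of_le (fun _ => abs_nonneg _)
      (fun j => abs_gpot_le f k j b (y j)) ?_
    exact (hsum k b).add (hsum k (!b))
  have hgsum : ∀ (k : G) (b : Bool) (y : G → Bool),
      Summable fun j => gpot f k j b (y j) := fun k b y => (habs_summ k b y).of_abs
  -- uniform bound on the field
  have habsS : ∀ (k : G) (b : Bool) (y : G → Bool),
      |∑' j, gpot f k j b (y j)| ≤ 2*r := by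
    intro k b y
    have h1 : ‖∑' j, gpot f k j b (y j)‖ ≤ ∑' j, ‖gpot f k j b (y j)‖ := by
      apply norm_tsum_le_tsum_norm
      simpa [Real.norm_eq_abs] using habs_summ k b y
    simp only [Real.norm_eq_abs] at h1
    refine h1.trans ?_
    have h2 : ∑' j, |gpot f k j b (y j)| ≤
        ∑' j, (max |f k j b true| |f k j b false|
          + max |f k j (!b) true| |f k j (!b) false|) :=
      Summable.tsum_le_tsum (fun j => abs_gpot_le f k j b (y j)) (habs_summ k b y)
        ((hsum k b).add (hsum k (!b)))
    refine h2.trans ?_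
    rw [Summable.tsum_add (hsum k b) (hsum k (!b))]
    have := hrange k b
    have := hrange k (!b)
    linarith
  -- the lower bound on spec
  set δ : ℝ := (1 + Real.exp (2*r))⁻¹ with hδdef
  have hδ : 0 < δ := by positivity
  have hlb : ∀ (k : G) (b : Bool) (y : G → Bool), δ ≤ spec f k b y := by
    intro k b y
    unfold spec
    rw [one_div]
    apply inv_anti₀ (by positivity)
    have h := habsS k b y
    rw [abs_le] at h
    have : Real.exp (-(∑' j, gpot f k j b (y j))) ≤ Real.exp (2*r) :=
      Real.exp_le_exp.mpr (by linarith)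
    linarith
  -- summability of omega and the value of Δ
  have hωsum : Summable fun j => omegaf f i j := by
    refine Summable.of_nonneg_of_le (fun j => omegaf_nonneg f i j) (fun j => ?_)
      (((hsum i true).add (hsum i false)).add ((hsum i true).add (hsum i false)))
    rw [omegaf_eq]
    refine (abs_sub _ _).trans (add_le_add ?_ ?_)
    · exact abs_gpot_le f i j true true
    · exact abs_gpot_le f i j true false
  set Δ : ℝ := ∑' j : {j : G // j ∉ V}, omegaf f i (j : G) with hΔdef
  have hΔeq : Δ = ∑' j, Set.indicator {j : G | j ∉ V} (omegaf f i) j := by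
    rw [hΔdef]
    exact tsum_subtype {j : G | j ∉ V} (omegaf f i)
  have hind_sum : Summable (Set.indicator {j : G | j ∉ V} (omegaf f i)) :=
    hωsum.indicator _
  have hΔ0 : 0 ≤ Δ := by
    rw [hΔdef]
    exact tsum_nonneg fun j => omegaf_nonneg f i j
  have hΔ4r : Δ ≤ 4*r := by
    rw [hΔeq]
    have hb : Summable fun j => (max |f i j true true| |f i j true false|
        + max |f i j false true| |f i j false false|)
        + (max |f i j true true| |f i j true false|
        + max |f i j false true| |f i j false false|) :=
      ((hsum i true).add (hsum i false)).add ((hsum i true).add (hsum i false))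
    have h1 : ∑' j, Set.indicator {j : G | j ∉ V} (omegaf f i) j ≤
        ∑' j, ((max |f i j true true| |f i j true false|
          + max |f i j false true| |f i j false false|)
          + (max |f i j true true| |f i j true false|
          + max |f i j false true| |f i j false false|)) := by
      refine Summable.tsum_le_tsum (fun j => ?_) hind_sum hb
      refine (Set.indicator_le_self' (fun j _ => omegaf_nonneg f i j) j).trans ?_
      rw [omegaf_eq]
      refine (abs_sub _ _).trans (add_le_add ?_ ?_)
      · exact abs_gpot_le f i j true true
      · exact abs_gpot_le f i j true false
    refine h1.trans ?_
    rw [Summable.tsum_add ((hsum i true).add (hsum i false)) ((hsum i true).add (hsum i false)),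
      Summable.tsum_add (hsum i true) (hsum i false)]
    have h2 := hrange i true
    have h3 := hrange i false
    linarith
  -- bounds on condProb
  have hcond01 : ∀ x : G → Bool, 0 ≤ condProb P i V x ∧ condProb P i V x ≤ 1 := by
    intro x
    unfold condProb
    split_ifs with h
    · norm_num
    · constructor
      · exact div_nonneg ENNReal.toReal_nonneg ENNReal.toReal_nonneg
      · apply div_le_one_of_le₀
        · apply ENNReal.toReal_mono (measure_ne_top P _)
          exact measure_mono fun y hy => hy.2
        · exact ENNReal.toReal_nonneg
  -- boundedness of the sup
  have hbdd : BddAbove (Set.range fun x : G → Bool =>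
      |spec f i (x i) x - condProb P i V x|) := by
    refine ⟨2, ?_⟩
    rintro _ ⟨x, rfl⟩
    have h1 := spec_pos f i (x i) x
    have h2 := spec_le_one f i (x i) x
    have h3 := hcond01 x
    rw [abs_le]
    constructor <;> [linarith [h3.2]; linarith [h3.1]]
  constructor
  · -- LOWER BOUND
    set b0 : G → Bool := fun j =>
      decide (gpot f i j true false ≤ gpot f i j true true) with hb0
    set yp : G → Bool := fun j => if j ∈ V ∨ j = i then true else b0 j with hyp
    set ym : G → Bool := fun j => if j ∈ V ∨ j = i then true else !(b0 j) with hym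
    have hagree : ∀ j, (j ∈ V ∨ j = i) → yp j = ym j := by
      intro j hj
      rw [hyp, hym]
      simp only [if_pos hj]
    have hyp_i : yp i = true := by rw [hyp]; simp
    have hym_i : ym i = true := by rw [hym]; simp
    -- condProb agrees on yp and ym
    have hcondeq : condProb P i V yp = condProb P i V ym := by
      have h1 : {y : G → Bool | ∀ j ∈ V.erase i, y j = yp j}
          = {y : G → Bool | ∀ j ∈ V.erase i, y j = ym j} := by
        ext y
        constructor <;> intro h j hj
        · rw [← hagree j (Or.inl (Finset.mem_of_mem_erase hj))]; exact h j hj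
        · rw [hagree j (Or.inl (Finset.mem_of_mem_erase hj))]; exact h j hj
      have h2 : {y : G → Bool | y i = yp i ∧ ∀ j ∈ V.erase i, y j = yp j}
          = {y : G → Bool | y i = ym i ∧ ∀ j ∈ V.erase i, y j = ym j} := by
        ext y
        rw [Set.mem_setOf_eq, Set.mem_setOf_eq, hyp_i, hym_i]
        constructor <;> rintro ⟨ha, h⟩ <;> refine ⟨ha, fun j hj => ?_⟩
        · rw [← hagree j (Or.inl (Finset.mem_of_mem_erase hj))]; exact h j hj
        · rw [hagree j (Or.inl (Finset.mem_of_mem_erase hj))]; exact h j hj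
      unfold condProb
      rw [h1, h2]
    -- the difference of the fields equals Δ
    have hdif : ∀ j, gpot f i j true (yp j) - gpot f i j true (ym j)
        = Set.indicator {j : G | j ∉ V} (omegaf f i) j := by
      intro j
      by_cases hj : j ∈ V ∨ j = i
      · rw [hagree j hj, sub_self]
        rcases hj with hj | rfl
        · rw [Set.indicator_of_notMem (by simp [hj])]
        · by_cases hi : j ∈ V
          · rw [Set.indicator_of_notMem (by simp [hi])]
          · rw [Set.indicator_of_mem (by simp [hi])]
            simp [omegaf_eq, gpot, hdiag]
      · push_neg at hj
        have hj1 : ¬(j ∈ V ∨ j = i) := by tauto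
        have hypj : yp j = b0 j := by rw [hyp]; simp only [if_neg hj1]
        have hymj : ym j = !(b0 j) := by rw [hym]; simp only [if_neg hj1]
        rw [hypj, hymj, Set.indicator_of_mem (by simp [hj.1]), omegaf_eq]
        by_cases hg : gpot f i j true false ≤ gpot f i j true true
        · have hb : b0 j = true := by rw [hb0]; simp [hg]
          rw [hb]
          simp only [Bool.not_true]
          rw [abs_of_nonneg (by linarith)]
        · have hb : b0 j = false := by rw [hb0]; simp [hg]
          rw [hb]
          simp only [Bool.not_false]
          rw [abs_of_nonpos (by linarith)]
          ring
    have hSdiff : (∑' j, gpot f i j true (yp j)) - (∑' j, gpot f i j true (ym j)) = Δ := by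
      rw [← Summable.tsum_sub (hgsum i true yp) (hgsum i true ym), tsum_congr hdif, ← hΔeq]
    have hSp := habsS i true yp
    have hSm := habsS i true ym
    have hvu : (∑' j, gpot f i j true (ym j)) ≤ (∑' j, gpot f i j true (yp j)) := by
      linarith
    have hlow := sigma_ge_lower hr hSp hSm hvu (by linarith)
    rw [hSdiff] at hlow
    have hspecp : spec f i true yp = 1 / (1 + Real.exp (-(∑' j, gpot f i j true (yp j)))) :=
      rfl
    have hspecm : spec f i true ym = 1 / (1 + Real.exp (-(∑' j, gpot f i j true (ym j)))) :=
      rfl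
    -- relate to the sup
    have hsup1 : spec f i (yp i) yp - condProb P i V yp
        ≤ ⨆ x : G → Bool, |spec f i (x i) x - condProb P i V x| :=
      (le_abs_self _).trans (le_ciSup hbdd yp)
    have hsup2 : -(spec f i (ym i) ym - condProb P i V ym)
        ≤ ⨆ x : G → Bool, |spec f i (x i) x - condProb P i V x| :=
      (neg_le_abs _).trans (le_ciSup hbdd ym)
    rw [hyp_i] at hsup1
    rw [hym_i] at hsup2
    have hkey : (1 - Real.exp (-(4*r))) * Real.exp (-(2*r)) / (4*r*(1 + Real.exp (2*r))^2) * Δ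
        ≤ 2 * (⨆ x : G → Bool, |spec f i (x i) x - condProb P i V x|) := by
      have := hlow
      rw [← hspecp, ← hspecm] at this
      have hdd : spec f i true yp - spec f i true ym
          = (spec f i true yp - condProb P i V yp)
            - (spec f i true ym - condProb P i V ym) := by
        rw [hcondeq]; ring
      rw [hdd] at this
      linarith
    -- compare constants
    have hX : 0 ≤ (1 - Real.exp (-(4*r))) * Real.exp (-(2*r)) := by
      have : Real.exp (-(4*r)) ≤ 1 := Real.exp_le_one_iff.mpr (by linarith)
      have := Real.exp_pos (-(2*r))
      nlinarith
    have hc : (1 - Real.exp (-(4*r))) * Real.exp (-(2*r)) / (4*r*(1 + Real.exp (2*r))^3)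
        ≤ (1 - Real.exp (-(4*r))) * Real.exp (-(2*r)) / (4*r*(1 + Real.exp (2*r))^2) / 2 := by
      rw [div_div, div_le_div_iff₀ (by positivity) (by positivity)]
      have hE1 : (1:ℝ) ≤ Real.exp (2*r) := Real.one_le_exp (by linarith)
      nlinarith [mul_nonneg (mul_nonneg hX (by linarith : (0:ℝ) ≤ 4*r))
        (mul_nonneg (sq_nonneg (1 + Real.exp (2*r)))
          (by linarith : (0:ℝ) ≤ Real.exp (2*r) - 1))]
    calc (1 - Real.exp (-(4*r))) * Real.exp (-(2*r)) / (4*r*(1 + Real.exp (2*r))^3) * Δ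
        ≤ ((1 - Real.exp (-(4*r))) * Real.exp (-(2*r))
            / (4*r*(1 + Real.exp (2*r))^2) / 2) * Δ :=
          mul_le_mul_of_nonneg_right hc hΔ0
      _ ≤ ⨆ x : G → Bool, |spec f i (x i) x - condProb P i V x| := by linarith
  · -- UPPER BOUND
    refine ciSup_le fun x => ?_
    set W : Finset G := V.erase i with hW
    set B : Set (G → Bool) := {y | ∀ j ∈ W, y j = x j} with hB
    have hBmeas : MeasurableSet B := measurableSet_cylinder W x
    have hBpos : 0 < P B := cylinder_pos f P hP δ hδ hlb hgsum W x
    have hpb : 0 < (P B).toReal := ENNReal.toReal_pos hBpos.ne' (measure_ne_top P B)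
    have hBinv : ∀ y z : G → Bool, (∀ j, j ≠ i → y j = z j) → (y ∈ B ↔ z ∈ B) := by
      intro y z hyz
      constructor <;> intro h j hj
      · rw [← hyz j (Finset.ne_of_mem_erase hj)]; exact h j hj
      · rw [hyz j (Finset.ne_of_mem_erase hj)]; exact h j hj
    have hDLR := hP i B hBmeas hBinv (x i)
    have hnumset : {y : G → Bool | y i = x i ∧ ∀ j ∈ W, y j = x j}
        = B ∩ {y | y i = x i} := by
      ext y
      simp only [Set.mem_setOf_eq, Set.mem_inter_iff, hB]
      tauto
    have hInn : 0 ≤ ∫ y in B, spec f i (x i) y ∂P :=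
      setIntegral_nonneg hBmeas fun y _ => (spec_pos f i (x i) y).le
    have hcond : condProb P i V x = (∫ y in B, spec f i (x i) y ∂P) / (P B).toReal := by
      unfold condProb
      rw [if_neg hBpos.ne']
      rw [show {y : G → Bool | y i = x i ∧ ∀ j ∈ V.erase i, y j = x j}
        = B ∩ {y | y i = x i} from hnumset, hDLR, ENNReal.toReal_ofReal hInn]
    -- pointwise estimate on B
    have hpt : ∀ y ∈ B, |spec f i (x i) x - spec f i (x i) y|
        ≤ Real.exp (2*r) / (1 + Real.exp (-(2*r)))^2 * Δ := by
      intro y hy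
      have hSd : |(∑' j, gpot f i j (x i) (x j)) - (∑' j, gpot f i j (x i) (y j))| ≤ Δ := by
        rw [← Summable.tsum_sub (hgsum i (x i) x) (hgsum i (x i) y)]
        have hsub : Summable fun j => gpot f i j (x i) (x j) - gpot f i j (x i) (y j) :=
          (hgsum i (x i) x).sub (hgsum i (x i) y)
        have h1 : ‖∑' j, (gpot f i j (x i) (x j) - gpot f i j (x i) (y j))‖
            ≤ ∑' j, ‖gpot f i j (x i) (x j) - gpot f i j (x i) (y j)‖ := by
          apply norm_tsum_le_tsum_norm
          simpa [Real.norm_eq_abs] using hsub.abs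
        simp only [Real.norm_eq_abs] at h1
        refine h1.trans ?_
        rw [hΔeq]
        refine Summable.tsum_le_tsum (fun j => ?_) hsub.abs hind_sum
        by_cases hjV : j ∈ V
        · rw [Set.indicator_of_notMem (by simp [hjV])]
          by_cases hji : j = i
          · subst hji
            simp [gpot, hdiag]
          · have : y j = x j := hy j (Finset.mem_erase.mpr ⟨hji, hjV⟩)
            rw [this, sub_self, abs_zero]
        · rw [Set.indicator_of_mem (by simp [hjV])]
          exact abs_gpot_sub_le f i j (x i) (x j) (y j)
      have habs := sigma_abs_le hr (habsS i (x i) x) (habsS i (x i) y)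
      have : |spec f i (x i) x - spec f i (x i) y|
          ≤ Real.exp (2*r) / (1 + Real.exp (-(2*r)))^2
            * |(∑' j, gpot f i j (x i) (x j)) - (∑' j, gpot f i j (x i) (y j))| := habs
      refine this.trans ?_
      apply mul_le_mul_of_nonneg_left hSd (by positivity)
    -- main estimate
    have hid : spec f i (x i) x - condProb P i V x
        = (∫ y in B, (spec f i (x i) x - spec f i (x i) y) ∂P) / (P B).toReal := by
      rw [hcond]
      rw [integral_sub (integrable_const _).integrableOn
        (integrable_spec f i (x i) (hgsum i (x i)) P).integrableOn,
        setIntegral_const, measureReal_def, smul_eq_mul, eq_div_iff hpb.ne', sub_mul,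
        div_mul_cancel₀ _ hpb.ne']
      ring
    rw [hid]
    have hnorm : |∫ y in B, (spec f i (x i) x - spec f i (x i) y) ∂P|
        ≤ (Real.exp (2*r) / (1 + Real.exp (-(2*r)))^2 * Δ) * (P B).toReal := by
      have := norm_setIntegral_le_of_norm_le_const (f := fun y => spec f i (x i) x - spec f i (x i) y)
        (C := Real.exp (2*r) / (1 + Real.exp (-(2*r)))^2 * Δ) (measure_lt_top P B)
        (fun y hy => by
          rw [Real.norm_eq_abs]
          exact hpt y hy)
      simpa [Real.norm_eq_abs, measureReal_def] using this
    rw [abs_div, abs_of_pos hpb]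
    have h9 : |∫ y in B, (spec f i (x i) x - spec f i (x i) y) ∂P| / (P B).toReal
        ≤ Real.exp (2*r) / (1 + Real.exp (-(2*r)))^2 * Δ := by
      rw [div_le_iff₀ hpb]
      exact hnorm
    refine h9.trans ?_
    apply mul_le_mul_of_nonneg_right _ hΔ0
    -- exp(2r)/(1+exp(-2r))^2 ≤ (exp(4r)-1) exp(2r) / (4 r (1+exp(-2r))^2)
    rw [div_le_div_iff₀ (by positivity) (by positivity)]
    have h41 : 4*r + 1 ≤ Real.exp (4*r) := Real.add_one_le_exp (4*r)
    have hEQ : (0:ℝ) < Real.exp (2*r) * (1 + Real.exp (-(2*r)))^2 := by positivity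
    nlinarith [mul_le_mul_of_nonneg_right (show 4*r ≤ Real.exp (4*r) - 1 by linarith) hEQ.le]
end

section
/- In the setting of the model selection proof: suppose on an event Ω, for all V in a finite collection 𝒢_n, ‖P̂_{i|V} - P_{i|V}‖_∞ ≤ c₂ v_V for some positive numbers v_V, and suppose Ĝ ∈ 𝒢_n minimizes V ↦ -‖P̂_{i|V}‖_∞ + C v_V with C > c₂. Assume P satisfies H1 with constant κ_min, i.e. κ_min ‖P_{i|G} - P_{i|W}‖_∞ ≤ ‖P_{i|G}‖_∞ - ‖P_{i|W}‖_∞ for all finite W. Then on Ω, for every V ∈ 𝒢_n, ‖P̂_{i|Ĝ} - P_{i|G}‖_∞ ≤ max(1/κ_min, c₂/(C - c₂)) · (‖P_{i|G} - P_{i|V}‖_∞ + (C + c₂) v_V). -/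
lemma msel_bdd {X : Type*} (f : X → ℝ) (b : ℝ) (h : ∀ x, f x ≤ b) :
    BddAbove (Set.range f) := ⟨b, by rintro y ⟨x, rfl⟩; exact h x⟩

lemma msel_sup_le_sup_add {X : Type*} [Nonempty X] (f g : X → ℝ) (c : ℝ)
    (hg : BddAbove (Set.range g)) (hd : ∀ x, |f x - g x| ≤ c) :
    (⨆ x, f x) ≤ (⨆ x, g x) + c := by
  refine ciSup_le fun x => ?_
  have h1 : g x ≤ ⨆ x, g x := le_ciSup hg x
  have h2 := hd x
  have h3 := le_abs_self (f x - g x)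
  linarith

/-- Oracle inequality for the model selection rule: abstract model index `ι`,
configuration space `X`; `Phat V` is the empirical conditional probability
`P̂_{i|V}`, `Pt V` the true conditional `P_{i|V}`, `PG` the full specification
`P_{i|G}`, all taking values in `[0,1]`; sup-norms are suprema over `X`. -/
theorem model_selection_oracle {ι X : Type*} [Nonempty X] (𝒢 : Finset ι)
    (Phat Pt : ι → X → ℝ) (PG : X → ℝ)
    (hPhat : ∀ V x, Phat V x ∈ Set.Icc (0:ℝ) 1)
    (hPt : ∀ V x, Pt V x ∈ Set.Icc (0:ℝ) 1)
    (hPG : ∀ x, PG x ∈ Set.Icc (0:ℝ) 1)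
    (c₂ C κ : ℝ) (hc₂ : 0 < c₂) (hC : c₂ < C) (hκ : 0 < κ)
    (v : ι → ℝ) (hv : ∀ V ∈ 𝒢, 0 < v V)
    -- on the event Ω: sup-norm concentration for every model in the collection
    (hconc : ∀ V ∈ 𝒢, (⨆ x, |Phat V x - Pt V x|) ≤ c₂ * v V)
    -- Ĝ minimizes the penalized criterion over the collection
    (G0 : ι) (hG0 : G0 ∈ 𝒢)
    (hmin : ∀ V ∈ 𝒢, -(⨆ x, Phat G0 x) + C * v G0 ≤ -(⨆ x, Phat V x) + C * v V)
    -- assumption H1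
    (hH1 : ∀ V ∈ 𝒢, κ * (⨆ x, |PG x - Pt V x|) ≤ (⨆ x, PG x) - (⨆ x, Pt V x)) :
    ∀ V ∈ 𝒢, (⨆ x, |Phat G0 x - PG x|) ≤
      max (1/κ) (c₂ / (C - c₂)) * ((⨆ x, |PG x - Pt V x|) + (C + c₂) * v V) := by
  intro V hV
  set M := max (1/κ) (c₂ / (C - c₂)) with hMdef
  -- boundedness facts
  have bPt : ∀ W, BddAbove (Set.range (Pt W)) := fun W => msel_bdd _ 1 fun x => (hPt W x).2
  have bPh : ∀ W, BddAbove (Set.range (Phat W)) := fun W => msel_bdd _ 1 fun x => (hPhat W x).2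
  have bdPtG0 : BddAbove (Set.range (fun x => |PG x - Pt G0 x|)) := by
    refine msel_bdd _ 1 fun x => ?_
    have h1 := hPG x; have h2 := hPt G0 x
    rw [abs_le]; constructor <;> [linarith [h1.1, h2.2]; linarith [h1.2, h2.1]]
  have bdPtV : BddAbove (Set.range (fun x => |PG x - Pt V x|)) := by
    refine msel_bdd _ 1 fun x => ?_
    have h1 := hPG x; have h2 := hPt V x
    rw [abs_le]; constructor <;> [linarith [h1.1, h2.2]; linarith [h1.2, h2.1]]
  have bdPhG0 : BddAbove (Set.range (fun x => |Phat G0 x - Pt G0 x|)) := by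
    refine msel_bdd _ 1 fun x => ?_
    have h1 := hPhat G0 x; have h2 := hPt G0 x
    rw [abs_le]; constructor <;> [linarith [h1.1, h2.2]; linarith [h1.2, h2.1]]
  have bdPhV : BddAbove (Set.range (fun x => |Phat V x - Pt V x|)) := by
    refine msel_bdd _ 1 fun x => ?_
    have h1 := hPhat V x; have h2 := hPt V x
    rw [abs_le]; constructor <;> [linarith [h1.1, h2.2]; linarith [h1.2, h2.1]]
  -- abbreviations
  set A := ⨆ x, |PG x - Pt V x| with hA
  set E := ⨆ x, |PG x - Pt G0 x| with hE
  -- pointwise concentration bounds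
  have hcG0 : ∀ x, |Phat G0 x - Pt G0 x| ≤ c₂ * v G0 :=
    fun x => le_trans (le_ciSup bdPhG0 x) (hconc G0 hG0)
  have hcV : ∀ x, |Phat V x - Pt V x| ≤ c₂ * v V :=
    fun x => le_trans (le_ciSup bdPhV x) (hconc V hV)
  -- norm comparisons
  have h1 : (⨆ x, Phat G0 x) ≤ (⨆ x, Pt G0 x) + c₂ * v G0 :=
    msel_sup_le_sup_add _ _ _ (bPt G0) hcG0
  have h2 : (⨆ x, Pt V x) ≤ (⨆ x, Phat V x) + c₂ * v V :=
    msel_sup_le_sup_add _ _ _ (bPh V) fun x => by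
      rw [abs_sub_comm]; exact hcV x
  have h3 : (⨆ x, PG x) ≤ (⨆ x, Pt V x) + A :=
    msel_sup_le_sup_add _ _ _ (bPt V) fun x => le_ciSup bdPtV x
  have h4 := hmin V hV
  have hH1G0 := hH1 G0 hG0
  -- κ E ≤ A + (C+c₂) v V - (C-c₂) v G0
  have key : κ * E ≤ A + (C + c₂) * v V - (C - c₂) * v G0 := by
    rw [← hE] at hH1G0; linarith
  have hE0 : (0:ℝ) ≤ E := le_trans (abs_nonneg _) (le_ciSup bdPtG0 (Classical.arbitrary X))
  have hvG0 : (0:ℝ) < v G0 := hv G0 hG0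
  -- M facts
  have hM1 : 1 ≤ M * κ := by
    have := le_max_left (1/κ) (c₂ / (C - c₂))
    rw [← hMdef] at this
    calc (1:ℝ) = (1/κ) * κ := by field_simp
    _ ≤ M * κ := by nlinarith
  have hM2 : c₂ ≤ M * (C - c₂) := by
    have h := le_max_right (1/κ) (c₂ / (C - c₂))
    rw [← hMdef] at h
    have hCc : (0:ℝ) < C - c₂ := by linarith
    calc c₂ = (c₂ / (C - c₂)) * (C - c₂) := by field_simp
    _ ≤ M * (C - c₂) := by nlinarith
  have hM0 : (0:ℝ) ≤ M := le_trans (by positivity) (le_max_left (1/κ) (c₂ / (C - c₂)))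
  -- triangle inequality for the goal
  have tri : (⨆ x, |Phat G0 x - PG x|) ≤ c₂ * v G0 + E := by
    refine ciSup_le fun x => ?_
    have ht := abs_sub_le (Phat G0 x) (Pt G0 x) (PG x)
    have h5 := hcG0 x
    have h6 : |Pt G0 x - PG x| ≤ E := by
      rw [abs_sub_comm]; exact le_ciSup bdPtG0 x
    linarith
  refine le_trans tri ?_
  -- final arithmetic
  nlinarith [mul_nonneg hM0 (by linarith : (0:ℝ) ≤ A + (C + c₂) * v V - (C - c₂) * v G0 - κ * E),
    mul_le_mul_of_nonneg_right hM2 hvG0.le, mul_le_mul_of_nonneg_right hM1 hE0]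
end
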